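/- Let m > n be positive integers and f: ℓ_1 → ℝ a Lipschitz function with f(0)=0. Then the function Q_n(f) ∘ τ_m: ℓ_1^m → ℝ has property (AF) on each hypercube C(x^{ε,0}_{h,m−1}, 2^{1−m}) ⊆ ℝ^m, for every ε ∈ {−1,1}^m and every h ∈ {0,…,2^{2m−2}−1}^m. -/

import Mathlib

noncomputable section

open Filter Topology
open scoped Classical

/-- The sign `±1` associated with a Boolean. -/
def bsgn (b : Bool) : ℝ := if b then 1 else -1

/-- The hypercube `C(y,R) = {x : max_i |x_i − y_i| ≤ R/2}` with centre `y` and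
edge length `R`. -/
def cube {n : ℕ} (y : Fin n → ℝ) (R : ℝ) : Set (Fin n → ℝ) :=
  {x | ∀ i, |x i - y i| ≤ R / 2}

/-- The vertex `A_δ(y,R) = y + (R/2)δ` of the hypercube `C(y,R)`, `δ ∈ {−1,1}^n`. -/
def vertex {n : ℕ} (y : Fin n → ℝ) (R : ℝ) (δ : Fin n → Bool) : Fin n → ℝ :=
  fun i => y i + R / 2 * bsgn (δ i)

/-- A function `Φ` has property (AF) on a (convex) set `B ⊆ ℝ^n` if its restriction
to every segment contained in `B` and parallel to a coordinate axis is affine. -/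
def HasAF {n : ℕ} (B : Set (Fin n → ℝ)) (Φ : (Fin n → ℝ) → ℝ) : Prop :=
  ∀ a b : Fin n → ℝ, a ∈ B → b ∈ B → (∃ i : Fin n, ∀ j, j ≠ i → a j = b j) →
    ∀ t : ℝ, t ∈ Set.Icc (0 : ℝ) 1 →
      Φ (fun j => a j + t * (b j - a j)) = (1 - t) * Φ a + t * Φ b

/-- The coordinatewise-affine interpolation `Λ(f, C(y,R))` of `f` on the hypercube
`C(y,R)`: the unique function with property (AF) on `C(y,R)` agreeing with `f` at
all `2^n` vertices (written here in its explicit multilinear form). -/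
def lam {n : ℕ} (f : (Fin n → ℝ) → ℝ) (y : Fin n → ℝ) (R : ℝ)
    (x : Fin n → ℝ) : ℝ :=
  ∑ δ : Fin n → Bool,
    (∏ i, if δ i then (x i - y i + R / 2) / R else 1 - (x i - y i + R / 2) / R) *
      f (vertex y R δ)

/-- `g` is `L`-Lipschitz on the set `S` with respect to the `ℓ₁`-norm on `ℝ^n`. -/
def LipOnL1 {n : ℕ} (L : ℝ) (S : Set (Fin n → ℝ)) (g : (Fin n → ℝ) → ℝ) : Prop :=
  ∀ x ∈ S, ∀ x' ∈ S, |g x - g x'| ≤ L * ∑ i, |x i - x' i|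
/-- `π_R(t)`: the nearest point to `t` in `[−R/2, R/2]`. -/
def clamp (R t : ℝ) : ℝ := max (-(R / 2)) (min (R / 2) t)

/-- `Π_R^n(x) = (π_R(x_1),…,π_R(x_n))`, the nearest-point retraction onto `C(0,R)`. -/
def clampCube {n : ℕ} (R : ℝ) (x : Fin n → ℝ) : Fin n → ℝ := fun i => clamp R (x i)

/-- The point `x^{ε,y}_{h,k} = y + 2^{−k−1} ε + 2^{−k} (ε_1 h_1, …, ε_n h_n)`. -/
def gridPt {n : ℕ} (ε : Fin n → Bool) (y : Fin n → ℝ) (h : Fin n → ℕ) (k : ℕ) :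
    Fin n → ℝ :=
  fun i => y i + (2 : ℝ) ^ (-(k : ℤ) - 1) * bsgn (ε i) +
    (2 : ℝ) ^ (-(k : ℤ)) * (bsgn (ε i) * (h i : ℝ))

/-- For `v ∈ C(0,2^n)`, an admissible choice of `ε ∈ {−1,1}^n` for a cube
`C(x^{ε,0}_{h,n−1}, 2^{1−n})` of the canonical tiling containing `v`. -/
def epsChoice {n : ℕ} (v : Fin n → ℝ) : Fin n → Bool := fun i => 0 ≤ v i

/-- For `v ∈ C(0,2^n)`, an admissible choice of `h ∈ {0,…,2^{2n−2}−1}^n` for a cube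
`C(x^{ε,0}_{h,n−1}, 2^{1−n})` of the canonical tiling containing `v`. -/
def hChoice (n : ℕ) (v : Fin n → ℝ) : Fin n → ℕ :=
  fun i => min (Int.toNat ⌊|v i| * (2 : ℝ) ^ ((n : ℤ) - 1)⌋) (2 ^ (2 * n - 2) - 1)

/-- The operator `P_n`: `P_n(g)(u) = Λ(g, C(x^{ε,0}_{h,n−1}, 2^{1−n}))(Π_{2^n}^n(u))`,
where `ε ∈ {−1,1}^n` and `h ∈ {0,…,2^{2n−2}−1}^n` are (admissibly) chosen so that
`Π_{2^n}^n(u) ∈ C(x^{ε,0}_{h,n−1}, 2^{1−n})`. -/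
def Pn (n : ℕ) (g : (Fin n → ℝ) → ℝ) (u : Fin n → ℝ) : ℝ :=
  lam g
    (gridPt (epsChoice (clampCube ((2 : ℝ) ^ n) u)) 0
      (hChoice n (clampCube ((2 : ℝ) ^ n) u)) (n - 1))
    ((2 : ℝ) ^ (1 - (n : ℤ)))
    (clampCube ((2 : ℝ) ^ n) u)

/-- The Banach space `ℓ₁` of absolutely summable real sequences. -/
abbrev EllOne : Type := lp (fun _ : ℕ => ℝ) 1

/-- The canonical injection `τ_n : ℓ₁^n → ℓ₁`, `τ_n(x) = (x_1,…,x_n,0,0,…)`. -/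
def tau (n : ℕ) (x : Fin n → ℝ) : EllOne :=
  ⟨fun j => if h : j < n then x ⟨j, h⟩ else 0, by
    refine (memℓp_zero ?_).of_exponent_ge (by simp)
    refine (Set.finite_Iio n).subset fun j hj => ?_
    simp only [Set.mem_setOf_eq] at hj
    by_contra hc
    simp only [Set.mem_Iio, not_lt] at hc
    exact hj (dif_neg (not_lt.mpr hc))⟩

/-- The canonical projection `ρ_n : ℓ₁ → ℓ₁^n`, `ρ_n(x) = (x_1,…,x_n)`. -/
def rho (n : ℕ) (x : EllOne) : Fin n → ℝ := fun i => x (i : ℕ)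

/-- The operator `Q_n` on `Lip_0(ℓ₁)`: `Q_n(f)(x) = P_n(f ∘ τ_n)(ρ_n(x))`. -/
def Qn (n : ℕ) (f : EllOne → ℝ) (x : EllOne) : ℝ :=
  Pn n (fun u => f (tau n u)) (rho n x)

/-- `V_n`: the set of all vertices of all the cubes `C(x^{ε,0}_{h,n−1}, 2^{1−n})`,
`ε ∈ {−1,1}^n`, `h ∈ {0,…,2^{2n−2}−1}^n`. -/
def Vn (n : ℕ) : Set (Fin n → ℝ) :=
  {v | ∃ (ε : Fin n → Bool) (h : Fin n → ℕ) (δ : Fin n → Bool),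
    (∀ i, h i ≤ 2 ^ (2 * n - 2) - 1) ∧
    v = vertex (gridPt ε 0 h (n - 1)) ((2 : ℝ) ^ (1 - (n : ℤ))) δ}

open scoped NNReal

section Helpers

lemma bsgn_mul_self (b : Bool) : bsgn b * bsgn b = 1 := by cases b <;> simp [bsgn]

lemma abs_bsgn (b : Bool) : |bsgn b| = 1 := by cases b <;> simp [bsgn]

lemma clamp_eq_self {R t : ℝ} (h : |t| ≤ R / 2) : clamp R t = t := by
  rw [abs_le] at h
  unfold clamp
  rw [min_eq_right h.2, max_eq_right h.1]

lemma clamp_top {R t : ℝ} (hR : 0 ≤ R) (h : R / 2 ≤ t) : clamp R t = R / 2 := by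
  unfold clamp
  rw [min_eq_left h, max_eq_right (by linarith)]

lemma clamp_bot {R t : ℝ} (hR : 0 ≤ R) (h : t ≤ -(R / 2)) : clamp R t = -(R / 2) := by
  unfold clamp
  rcases le_total (R/2) t with h' | h'
  · rw [min_eq_left h']; exact max_eq_left (by linarith)
  · rw [min_eq_right h']; exact max_eq_left h

lemma gridPt_coord {n : ℕ} (hn : 0 < n) (ε : Fin n → Bool) (h : Fin n → ℕ) (j : Fin n) :
    gridPt ε 0 h (n - 1) j
      = bsgn (ε j) * ((2:ℝ) ^ (-(n:ℤ)) + (2:ℝ) ^ (1 - (n:ℤ)) * (h j : ℝ)) := by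
  unfold gridPt
  have h1 : ((n - 1 : ℕ) : ℤ) = (n : ℤ) - 1 := by omega
  rw [h1]
  have e1 : (-((n:ℤ) - 1) - 1) = -(n:ℤ) := by ring
  have e2 : (-((n:ℤ) - 1)) = 1 - (n:ℤ) := by ring
  rw [e1, e2]
  simp only [Pi.zero_apply]
  ring

lemma lam_affine {n : ℕ} (g : (Fin n → ℝ) → ℝ) (y : Fin n → ℝ) (R : ℝ)
    (i : Fin n) (a b : Fin n → ℝ) (hab : ∀ j, j ≠ i → a j = b j) (t : ℝ) :
    lam g y R (fun j => a j + t * (b j - a j))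
      = (1 - t) * lam g y R a + t * lam g y R b := by
  unfold lam
  rw [Finset.mul_sum, Finset.mul_sum, ← Finset.sum_add_distrib]
  refine Finset.sum_congr rfl fun δ _ => ?_
  have hprod : (∏ j, (if δ j then ((fun j => a j + t * (b j - a j)) j - y j + R / 2) / R
        else 1 - ((fun j => a j + t * (b j - a j)) j - y j + R / 2) / R))
      = (1 - t) * (∏ j, (if δ j then (a j - y j + R / 2) / R
            else 1 - (a j - y j + R / 2) / R))
        + t * (∏ j, (if δ j then (b j - y j + R / 2) / R
            else 1 - (b j - y j + R / 2) / R)) := by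
    rw [← Finset.mul_prod_erase Finset.univ _ (Finset.mem_univ i),
        ← Finset.mul_prod_erase Finset.univ
          (fun j => if δ j then (a j - y j + R / 2) / R else 1 - (a j - y j + R / 2) / R)
          (Finset.mem_univ i),
        ← Finset.mul_prod_erase Finset.univ
          (fun j => if δ j then (b j - y j + R / 2) / R else 1 - (b j - y j + R / 2) / R)
          (Finset.mem_univ i)]
    have ea : ∀ j ∈ Finset.univ.erase i,
        (if δ j then ((fun j => a j + t * (b j - a j)) j - y j + R / 2) / R
          else 1 - ((fun j => a j + t * (b j - a j)) j - y j + R / 2) / R)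
        = (if δ j then (a j - y j + R / 2) / R else 1 - (a j - y j + R / 2) / R) := by
      intro j hj
      have : b j = a j := (hab j (Finset.ne_of_mem_erase hj)).symm
      simp only [this]
      ring_nf
    have eb : ∀ j ∈ Finset.univ.erase i,
        (if δ j then (b j - y j + R / 2) / R else 1 - (b j - y j + R / 2) / R)
        = (if δ j then (a j - y j + R / 2) / R else 1 - (a j - y j + R / 2) / R) := by
      intro j hj
      have : b j = a j := (hab j (Finset.ne_of_mem_erase hj)).symm
      simp only [this]
    rw [Finset.prod_congr rfl ea, Finset.prod_congr rfl eb]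
    cases hδ : δ i <;> simp only [hδ, Bool.false_eq_true, ite_true, ite_false] <;> ring
  rw [hprod]; ring

end Helpers
section Face

lemma lam_face {n : ℕ} (g : (Fin n → ℝ) → ℝ) (y y' : Fin n → ℝ) {R : ℝ} (hR : R ≠ 0)
    (i : Fin n) (hyy : ∀ j, j ≠ i → y j = y' j) (hy'i : y' i = y i + R)
    (w : Fin n → ℝ) (hw : w i = y i + R / 2) :
    lam g y R w = lam g y' R w := by
  have hWi : (w i - y i + R / 2) / R = 1 := by
    rw [hw]; field_simp; ring
  have hWi' : (w i - y' i + R / 2) / R = 0 := by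
    have : w i - y' i + R / 2 = 0 := by rw [hw, hy'i]; ring
    rw [this, zero_div]
  have zero1 : ∀ δ : Fin n → Bool, δ i = false →
      (∏ j, if δ j then (w j - y j + R / 2) / R else 1 - (w j - y j + R / 2) / R) *
        g (vertex y R δ) = 0 := by
    intro δ hδ
    rw [Finset.prod_eq_zero (Finset.mem_univ i)
      (by simp only [hδ, Bool.false_eq_true, ite_false, hWi]; ring), zero_mul]
  have zero2 : ∀ δ : Fin n → Bool, δ i = true →
      (∏ j, if δ j then (w j - y' j + R / 2) / R else 1 - (w j - y' j + R / 2) / R) *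
        g (vertex y' R δ) = 0 := by
    intro δ hδ
    rw [Finset.prod_eq_zero (Finset.mem_univ i)
      (by simp only [hδ, ite_true, hWi']), zero_mul]
  have key : ∀ δ : Fin n → Bool, δ i = false →
      (∏ j, if Function.update δ i true j then (w j - y j + R / 2) / R
          else 1 - (w j - y j + R / 2) / R) * g (vertex y R (Function.update δ i true))
      = (∏ j, if δ j then (w j - y' j + R / 2) / R else 1 - (w j - y' j + R / 2) / R) *
          g (vertex y' R δ) := by
    intro δ hδ
    have hv : vertex y R (Function.update δ i true) = vertex y' R δ := by
      funext j
      by_cases hj : j = i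
      · subst hj
        simp only [vertex, Function.update_self, hδ, hy'i, bsgn, ite_true,
          Bool.false_eq_true, ite_false]
        linarith
      · simp only [vertex, Function.update_of_ne hj, hyy j hj]
    rw [hv]
    congr 1
    rw [← Finset.mul_prod_erase Finset.univ _ (Finset.mem_univ i),
        ← Finset.mul_prod_erase Finset.univ
          (fun j => if δ j then (w j - y' j + R / 2) / R else 1 - (w j - y' j + R / 2) / R)
          (Finset.mem_univ i)]
    have f1 : (if Function.update δ i true i then (w i - y i + R / 2) / R
        else 1 - (w i - y i + R / 2) / R) = 1 := by
      simp only [Function.update_self, ite_true, hWi]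
    have f2 : (if δ i then (w i - y' i + R / 2) / R else 1 - (w i - y' i + R / 2) / R) = 1 := by
      simp only [hδ, Bool.false_eq_true, ite_false, hWi']; ring
    rw [f1, f2]
    congr 1
    refine Finset.prod_congr rfl fun j hj => ?_
    have hj' : j ≠ i := Finset.ne_of_mem_erase hj
    rw [Function.update_of_ne hj', hyy j hj']
  unfold lam
  have step1 : ∑ δ : Fin n → Bool,
      (∏ j, if δ j then (w j - y j + R / 2) / R else 1 - (w j - y j + R / 2) / R) *
        g (vertex y R δ)
      = ∑ δ : Fin n → Bool, (if δ i then
          (∏ j, if δ j then (w j - y j + R / 2) / R else 1 - (w j - y j + R / 2) / R) *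
            g (vertex y R δ) else 0) := by
    refine Finset.sum_congr rfl fun δ _ => ?_
    cases hδ : δ i
    · simp only [Bool.false_eq_true, ite_false]; exact zero1 δ hδ
    · simp only [ite_true]
  have step3 : ∑ δ : Fin n → Bool,
      (∏ j, if δ j then (w j - y' j + R / 2) / R else 1 - (w j - y' j + R / 2) / R) *
        g (vertex y' R δ)
      = ∑ δ : Fin n → Bool, (if δ i then (0:ℝ) else
          (∏ j, if δ j then (w j - y' j + R / 2) / R else 1 - (w j - y' j + R / 2) / R) *
            g (vertex y' R δ)) := by
    refine Finset.sum_congr rfl fun δ _ => ?_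
    cases hδ : δ i
    · simp only [Bool.false_eq_true, ite_false]
    · simp only [ite_true]; exact zero2 δ hδ
  rw [step1, step3]
  have einv : Function.Involutive (fun δ : Fin n → Bool => Function.update δ i (!δ i)) := by
    intro δ; funext j
    by_cases hj : j = i
    · subst hj; simp
    · simp [Function.update_of_ne hj]
  refine (Fintype.sum_bijective _ einv.bijective _ _ fun δ => ?_).symm
  cases hδ : δ i
  · simp only [hδ, Bool.not_false, Bool.false_eq_true, ite_false, Function.update_self, ite_true]
    exact (key δ hδ).symm
  · simp only [hδ, Bool.not_true, ite_true, Function.update_self, Bool.false_eq_true, ite_false]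

end Face
section Scalar

lemma two_zpow_mul (k l : ℤ) : (2:ℝ)^k * (2:ℝ)^l = (2:ℝ)^(k+l) :=
  (zpow_add₀ (by norm_num : (2:ℝ) ≠ 0) k l).symm

lemma natpow_cast (l : ℕ) : ((2^l : ℕ) : ℝ) = (2:ℝ)^(l:ℤ) := by
  push_cast
  rw [← zpow_natCast (2:ℝ) l]

lemma two_pow_half (n : ℕ) : (2:ℝ)^(n:ℕ) / 2 = (2:ℝ)^((n:ℤ)-1) := by
  rw [← zpow_natCast (2:ℝ) n]
  rw [zpow_sub₀ (by norm_num : (2:ℝ) ≠ 0)]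
  norm_num

lemma choice_scalar (m n : ℕ) (hn : 0 < n) (hnm : n < m) (a : ℕ) (x : ℝ)
    (hx1 : (2:ℝ)^(1-(m:ℤ)) * a ≤ x) (hx2 : x ≤ (2:ℝ)^(1-(m:ℤ)) * (a+1)) :
    min (Int.toNat ⌊clamp ((2:ℝ)^(n:ℕ)) x * (2:ℝ)^((n:ℤ)-1)⌋) (2^(2*n-2)-1)
        = min (a / 2^(m-n)) (2^(2*n-2)-1)
    ∨ (min (Int.toNat ⌊clamp ((2:ℝ)^(n:ℕ)) x * (2:ℝ)^((n:ℤ)-1)⌋) (2^(2*n-2)-1)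
        = min (a / 2^(m-n)) (2^(2*n-2)-1) + 1
       ∧ clamp ((2:ℝ)^(n:ℕ)) x
           = (2:ℝ)^(1-(n:ℤ)) * (((min (a / 2^(m-n)) (2^(2*n-2)-1) : ℕ) : ℝ) + 1)) := by
  have h20 : (2:ℝ) ≠ 0 := by norm_num
  have hx0 : 0 ≤ x := le_trans (by positivity) hx1
  by_cases hA : a + 1 ≤ 2^(m+n-2)
  · -- unclamped branch
    have hcast : ((a:ℝ)+1) ≤ (2:ℝ)^((m+n-2 : ℕ):ℤ) := by
      rw [← natpow_cast]
      exact_mod_cast hA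
    have hxH : x ≤ (2:ℝ)^((n:ℤ)-1) := by
      have : (2:ℝ)^(1-(m:ℤ)) * ((a:ℝ)+1) ≤ (2:ℝ)^(1-(m:ℤ)) * (2:ℝ)^(((m+n-2:ℕ)):ℤ) :=
        mul_le_mul_of_nonneg_left hcast (by positivity)
      rw [two_zpow_mul] at this
      have he : (1-(m:ℤ)) + ((m+n-2:ℕ):ℤ) = (n:ℤ)-1 := by omega
      rw [he] at this
      exact le_trans hx2 this
    have hw : clamp ((2:ℝ)^(n:ℕ)) x = x := by
      apply clamp_eq_self
      rw [two_pow_half, abs_of_nonneg hx0]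
      exact hxH
    rw [hw]
    set qq := a / 2^(m-n) with hqq
    have hdm := Nat.div_add_mod a (2^(m-n))
    have hmod := Nat.mod_lt a (show 0 < 2^(m-n) by positivity)
    set P : ℝ := ((2^(m-n) : ℕ) : ℝ) with hP
    set e : ℝ := (2:ℝ)^((n:ℤ)-(m:ℤ)) with he
    have hPpos : 0 < P := by rw [hP]; positivity
    have hepos : 0 < e := by rw [he]; positivity
    have idEP : e * P = 1 := by
      rw [he, hP, natpow_cast, two_zpow_mul]
      have : ((n:ℤ)-(m:ℤ)) + ((m-n:ℕ):ℤ) = 0 := by omega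
      rw [this, zpow_zero]
    have idX : (2:ℝ)^(1-(m:ℤ)) * (2:ℝ)^((n:ℤ)-1) = e := by
      rw [two_zpow_mul, he]
      congr 1
      ring
    have hXlo : (qq:ℝ) ≤ x * (2:ℝ)^((n:ℤ)-1) := by
      have c1 : (qq:ℝ) * P ≤ (a:ℝ) := by
        rw [hP]; exact_mod_cast Nat.div_mul_le_self a (2^(m-n))
      have c2 : e * (a:ℝ) ≤ x * (2:ℝ)^((n:ℤ)-1) := by
        have := mul_le_mul_of_nonneg_right hx1 (le_of_lt (show (0:ℝ) < (2:ℝ)^((n:ℤ)-1) by positivity))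
        calc e * (a:ℝ) = ((2:ℝ)^(1-(m:ℤ)) * (2:ℝ)^((n:ℤ)-1)) * a := by rw [idX]
          _ = (2:ℝ)^(1-(m:ℤ)) * (a:ℝ) * (2:ℝ)^((n:ℤ)-1) := by ring
          _ ≤ x * (2:ℝ)^((n:ℤ)-1) := this
      have c3 : (qq:ℝ) = e * ((qq:ℝ) * P) := by rw [mul_comm (qq:ℝ) P, ← mul_assoc, mul_comm e P, ← mul_comm, ]; nlinarith [idEP]
      nlinarith [mul_le_mul_of_nonneg_left c1 (le_of_lt hepos)]
    have hXhi : x * (2:ℝ)^((n:ℤ)-1) ≤ (qq:ℝ) + 1 := by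
      have c1 : (a:ℝ) + 1 ≤ ((qq:ℝ)+1) * P := by
        rw [hP]
        have h1 := Nat.div_add_mod a (2^(m-n))
        have h2 : (a / 2^(m-n) + 1) * 2^(m-n) = 2^(m-n) * (a / 2^(m-n)) + 2^(m-n) := by ring
        have h3 : a + 1 ≤ (a / 2^(m-n) + 1) * 2^(m-n) := by omega
        rw [hqq]
        exact_mod_cast h3
      have c2 : x * (2:ℝ)^((n:ℤ)-1) ≤ e * ((a:ℝ)+1) := by
        have := mul_le_mul_of_nonneg_right hx2 (le_of_lt (show (0:ℝ) < (2:ℝ)^((n:ℤ)-1) by positivity))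
        calc x * (2:ℝ)^((n:ℤ)-1) ≤ (2:ℝ)^(1-(m:ℤ)) * ((a:ℝ)+1) * (2:ℝ)^((n:ℤ)-1) := this
          _ = ((2:ℝ)^(1-(m:ℤ)) * (2:ℝ)^((n:ℤ)-1)) * ((a:ℝ)+1) := by ring
          _ = e * ((a:ℝ)+1) := by rw [idX]
      have c3 : e * ((a:ℝ)+1) ≤ e * (((qq:ℝ)+1) * P) := mul_le_mul_of_nonneg_left c1 (le_of_lt hepos)
      have c4 : e * (((qq:ℝ)+1) * P) = (qq:ℝ)+1 := by
        calc e * (((qq:ℝ)+1) * P) = (e * P) * ((qq:ℝ)+1) := by ring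
          _ = (qq:ℝ)+1 := by rw [idEP]; ring
      linarith
    rcases lt_or_eq_of_le hXhi with hlt | heq
    · left
      have hfl : ⌊x * (2:ℝ)^((n:ℤ)-1)⌋ = (qq:ℤ) := by
        rw [Int.floor_eq_iff]
        constructor
        · exact_mod_cast hXlo
        · push_cast; exact hlt
      rw [hfl, Int.toNat_natCast]
    · have hfl : ⌊x * (2:ℝ)^((n:ℤ)-1)⌋ = ((qq:ℤ)+1) := by
        rw [heq, show ((qq:ℝ)+1) = (((qq:ℤ)+1 : ℤ):ℝ) by push_cast; ring, Int.floor_intCast]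
      rw [hfl]
      have htn : Int.toNat ((qq:ℤ)+1) = qq + 1 := by
        rw [show ((qq:ℤ)+1) = ((qq+1:ℕ):ℤ) by push_cast; ring, Int.toNat_natCast]
      rw [htn]
      by_cases hqc : qq + 1 ≤ 2^(2*n-2)-1
      · right
        rw [min_eq_left (by omega : qq ≤ 2^(2*n-2)-1)]
        constructor
        · omega
        · have hid : (2:ℝ)^(1-(n:ℤ)) * (2:ℝ)^((n:ℤ)-1) = 1 := by
            rw [two_zpow_mul]
            have : (1-(n:ℤ)) + ((n:ℤ)-1) = 0 := by ring
            rw [this, zpow_zero]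
          have heq' : x * (2:ℝ)^((n:ℤ)-1) = (qq:ℝ) + 1 := heq
          linear_combination (2:ℝ)^(1-(n:ℤ)) * heq' - x * hid
      · left
        have hone : 1 ≤ 2^(2*n-2) := Nat.one_le_two_pow
        omega
  · -- clamped branch
    left
    have hA' : 2^(m+n-2) ≤ a := by omega
    have hcast : (2:ℝ)^((m+n-2 : ℕ):ℤ) ≤ (a:ℝ) := by
      rw [← natpow_cast]
      exact_mod_cast hA'
    have hxlo : (2:ℝ)^((n:ℤ)-1) ≤ x := by
      have : (2:ℝ)^(1-(m:ℤ)) * (2:ℝ)^(((m+n-2:ℕ)):ℤ) ≤ (2:ℝ)^(1-(m:ℤ)) * (a:ℝ) :=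
        mul_le_mul_of_nonneg_left hcast (by positivity)
      rw [two_zpow_mul] at this
      have he : (1-(m:ℤ)) + ((m+n-2:ℕ):ℤ) = (n:ℤ)-1 := by omega
      rw [he] at this
      exact le_trans this hx1
    have hw : clamp ((2:ℝ)^(n:ℕ)) x = (2:ℝ)^((n:ℤ)-1) := by
      rw [← two_pow_half]
      apply clamp_top (by positivity)
      rw [two_pow_half]
      exact hxlo
    rw [hw]
    have hsq : (2:ℝ)^((n:ℤ)-1) * (2:ℝ)^((n:ℤ)-1) = (((2^(2*n-2):ℕ)):ℝ) := by
      rw [two_zpow_mul, natpow_cast]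
      congr 1
      omega
    rw [hsq, Int.floor_natCast, Int.toNat_natCast]
    have hq : 2^(2*n-2) ≤ a / 2^(m-n) := by
      rw [Nat.le_div_iff_mul_le (by positivity)]
      calc 2^(2*n-2) * 2^(m-n) = 2^((2*n-2)+(m-n)) := by rw [pow_add]
        _ = 2^(m+n-2) := by congr 1; omega
        _ ≤ a := hA'
    have hone : 1 ≤ 2^(2*n-2) := Nat.one_le_two_pow
    omega

end Scalar
section MoreClamp

lemma clamp_nonneg {R t : ℝ} (hR : 0 ≤ R) (ht : 0 ≤ t) : 0 ≤ clamp R t := by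
  unfold clamp
  have : (0:ℝ) ≤ min (R/2) t := le_min (by linarith) ht
  exact le_trans this (le_max_right _ _)

lemma clamp_neg (R t : ℝ) (hR : 0 ≤ R) : clamp R (-t) = - clamp R t := by
  unfold clamp
  simp only [min_def, max_def]
  split_ifs <;> linarith

lemma clamp_eq_zero {R t : ℝ} (hR : 0 < R) (h : clamp R t = 0) : t = 0 := by
  unfold clamp at h
  simp only [min_def, max_def] at h
  split_ifs at h <;> linarith

lemma two_zpow_dub (k : ℤ) : (2:ℝ)^(k+1) = 2 * (2:ℝ)^k := by
  rw [show k+1 = 1+k by ring, ← two_zpow_mul, zpow_one]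

lemma convex_bound {lo hi p q t : ℝ} (hp1 : lo ≤ p) (hp2 : p ≤ hi) (hq1 : lo ≤ q)
    (hq2 : q ≤ hi) (ht0 : 0 ≤ t) (ht1 : t ≤ 1) :
    lo ≤ p + t * (q - p) ∧ p + t * (q - p) ≤ hi := by
  constructor
  · nlinarith [mul_nonneg ht0 (sub_nonneg.2 hq1), mul_nonneg (sub_nonneg.2 ht1) (sub_nonneg.2 hp1)]
  · nlinarith [mul_nonneg ht0 (sub_nonneg.2 hq2), mul_nonneg (sub_nonneg.2 ht1) (sub_nonneg.2 hp2)]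

lemma bsgn_convex (s : Bool) (p q t : ℝ) :
    bsgn s * (p + t * (q - p)) = bsgn s * p + t * (bsgn s * q - bsgn s * p) := by ring

lemma clamp_affine (m n : ℕ) (hn : 0 < n) (hnm : n < m) (s : Bool) (A : ℕ)
    (p q t : ℝ) (ht0 : 0 ≤ t) (ht1 : t ≤ 1)
    (hp1 : (2:ℝ)^(1-(m:ℤ)) * A ≤ bsgn s * p) (hp2 : bsgn s * p ≤ (2:ℝ)^(1-(m:ℤ)) * ((A:ℝ)+1))
    (hq1 : (2:ℝ)^(1-(m:ℤ)) * A ≤ bsgn s * q) (hq2 : bsgn s * q ≤ (2:ℝ)^(1-(m:ℤ)) * ((A:ℝ)+1)) :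
    clamp ((2:ℝ)^(n:ℕ)) (p + t * (q - p))
      = clamp ((2:ℝ)^(n:ℕ)) p + t * (clamp ((2:ℝ)^(n:ℕ)) q - clamp ((2:ℝ)^(n:ℕ)) p) := by
  have hmid := convex_bound hp1 hp2 hq1 hq2 ht0 ht1
  rw [← bsgn_convex] at hmid
  by_cases hA : A + 1 ≤ 2^(m+n-2)
  · -- everything within range : clamp is identity
    have hcast : ((A:ℝ)+1) ≤ (2:ℝ)^((m+n-2 : ℕ):ℤ) := by
      rw [← natpow_cast]; exact_mod_cast hA
    have hub : (2:ℝ)^(1-(m:ℤ)) * ((A:ℝ)+1) ≤ (2:ℝ)^((n:ℤ)-1) := by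
      have h' : (2:ℝ)^(1-(m:ℤ)) * ((A:ℝ)+1) ≤ (2:ℝ)^(1-(m:ℤ)) * (2:ℝ)^(((m+n-2:ℕ)):ℤ) :=
        mul_le_mul_of_nonneg_left hcast (by positivity)
      rw [two_zpow_mul] at h'
      have he : (1-(m:ℤ)) + ((m+n-2:ℕ):ℤ) = (n:ℤ)-1 := by omega
      rwa [he] at h'
    have habs : ∀ z : ℝ, (2:ℝ)^(1-(m:ℤ)) * A ≤ bsgn s * z →
        bsgn s * z ≤ (2:ℝ)^(1-(m:ℤ)) * ((A:ℝ)+1) → |z| ≤ (2:ℝ)^(n:ℕ)/2 := by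
      intro z hz1 hz2
      rw [two_pow_half]
      have h0 : (0:ℝ) ≤ bsgn s * z := le_trans (by positivity) hz1
      have h1 : |bsgn s * z| ≤ (2:ℝ)^((n:ℤ)-1) := by
        rw [abs_of_nonneg h0]; linarith
      rwa [abs_mul, abs_bsgn, one_mul] at h1
    rw [clamp_eq_self (habs _ hmid.1 hmid.2), clamp_eq_self (habs _ hp1 hp2),
      clamp_eq_self (habs _ hq1 hq2)]
  · -- everything clamped to a constant
    have hA' : 2^(m+n-2) ≤ A := by omega
    have hcast : (2:ℝ)^((m+n-2 : ℕ):ℤ) ≤ (A:ℝ) := by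
      rw [← natpow_cast]; exact_mod_cast hA'
    have hlb : (2:ℝ)^((n:ℤ)-1) ≤ (2:ℝ)^(1-(m:ℤ)) * (A:ℝ) := by
      have h' : (2:ℝ)^(1-(m:ℤ)) * (2:ℝ)^(((m+n-2:ℕ)):ℤ) ≤ (2:ℝ)^(1-(m:ℤ)) * (A:ℝ) :=
        mul_le_mul_of_nonneg_left hcast (by positivity)
      rw [two_zpow_mul] at h'
      have he : (1-(m:ℤ)) + ((m+n-2:ℕ):ℤ) = (n:ℤ)-1 := by omega
      rwa [he] at h'
    have hge : ∀ z : ℝ, (2:ℝ)^(1-(m:ℤ)) * A ≤ bsgn s * z →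
        (2:ℝ)^(n:ℕ)/2 ≤ bsgn s * z := by
      intro z hz
      rw [two_pow_half]; linarith
    cases s
    · -- s = false : bsgn = -1, all values ≤ -(2^n/2)
      have hc : ∀ z : ℝ, (2:ℝ)^(1-(m:ℤ)) * A ≤ bsgn false * z →
          clamp ((2:ℝ)^(n:ℕ)) z = -((2:ℝ)^(n:ℕ)/2) := by
        intro z hz
        have := hge z hz
        simp only [bsgn, Bool.false_eq_true, ite_false] at this
        exact clamp_bot (by positivity) (by linarith)
      rw [hc _ hmid.1, hc _ hp1, hc _ hq1]
      ring
    · -- s = true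
      have hc : ∀ z : ℝ, (2:ℝ)^(1-(m:ℤ)) * A ≤ bsgn true * z →
          clamp ((2:ℝ)^(n:ℕ)) z = (2:ℝ)^(n:ℕ)/2 := by
        intro z hz
        have := hge z hz
        simp only [bsgn, ite_true] at this
        exact clamp_top (by positivity) (by linarith)
      rw [hc _ hmid.1, hc _ hp1, hc _ hq1]
      ring

lemma choice_scalar_signed (m n : ℕ) (hn : 0 < n) (hnm : n < m) (s : Bool) (a : ℕ)
    (u : ℝ) (h1 : (2:ℝ)^(1-(m:ℤ)) * a ≤ bsgn s * u)
    (h2 : bsgn s * u ≤ (2:ℝ)^(1-(m:ℤ)) * ((a:ℝ)+1)) :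
    (bsgn (decide (0 ≤ clamp ((2:ℝ)^(n:ℕ)) u)) *
        ((2:ℝ)^(-(n:ℤ)) + (2:ℝ)^(1-(n:ℤ)) *
          ((min (Int.toNat ⌊|clamp ((2:ℝ)^(n:ℕ)) u| * (2:ℝ)^((n:ℤ)-1)⌋) (2^(2*n-2)-1) : ℕ) : ℝ))
      = bsgn s * ((2:ℝ)^(-(n:ℤ)) + (2:ℝ)^(1-(n:ℤ)) * ((min (a / 2^(m-n)) (2^(2*n-2)-1) : ℕ):ℝ)))
    ∨ ((bsgn (decide (0 ≤ clamp ((2:ℝ)^(n:ℕ)) u)) *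
        ((2:ℝ)^(-(n:ℤ)) + (2:ℝ)^(1-(n:ℤ)) *
          ((min (Int.toNat ⌊|clamp ((2:ℝ)^(n:ℕ)) u| * (2:ℝ)^((n:ℤ)-1)⌋) (2^(2*n-2)-1) : ℕ) : ℝ))
      = bsgn s * ((2:ℝ)^(-(n:ℤ)) + (2:ℝ)^(1-(n:ℤ)) * ((min (a / 2^(m-n)) (2^(2*n-2)-1) : ℕ):ℝ))
          + (2:ℝ)^(1-(n:ℤ)))
      ∧ clamp ((2:ℝ)^(n:ℕ)) u
        = bsgn s * ((2:ℝ)^(-(n:ℤ)) + (2:ℝ)^(1-(n:ℤ)) * ((min (a / 2^(m-n)) (2^(2*n-2)-1) : ℕ):ℝ))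
          + (2:ℝ)^(-(n:ℤ)))
    ∨ ((bsgn (decide (0 ≤ clamp ((2:ℝ)^(n:ℕ)) u)) *
        ((2:ℝ)^(-(n:ℤ)) + (2:ℝ)^(1-(n:ℤ)) *
          ((min (Int.toNat ⌊|clamp ((2:ℝ)^(n:ℕ)) u| * (2:ℝ)^((n:ℤ)-1)⌋) (2^(2*n-2)-1) : ℕ) : ℝ))
      = bsgn s * ((2:ℝ)^(-(n:ℤ)) + (2:ℝ)^(1-(n:ℤ)) * ((min (a / 2^(m-n)) (2^(2*n-2)-1) : ℕ):ℝ))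
          - (2:ℝ)^(1-(n:ℤ)))
      ∧ clamp ((2:ℝ)^(n:ℕ)) u
        = bsgn s * ((2:ℝ)^(-(n:ℤ)) + (2:ℝ)^(1-(n:ℤ)) * ((min (a / 2^(m-n)) (2^(2*n-2)-1) : ℕ):ℝ))
          - (2:ℝ)^(-(n:ℤ))) := by
  have hdub : (2:ℝ)^(1-(n:ℤ)) = 2 * (2:ℝ)^(-(n:ℤ)) := by
    rw [show (1-(n:ℤ)) = (-(n:ℤ))+1 by ring, two_zpow_dub]
  cases s
  · -- s = false
    have h1' : (2:ℝ)^(1-(m:ℤ)) * a ≤ -u := by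
      simpa [bsgn] using h1
    have h2' : -u ≤ (2:ℝ)^(1-(m:ℤ)) * ((a:ℝ)+1) := by
      simpa [bsgn] using h2
    have hv : clamp ((2:ℝ)^(n:ℕ)) u = - clamp ((2:ℝ)^(n:ℕ)) (-u) := by
      rw [← clamp_neg _ (-u) (by positivity), neg_neg]
    have hw0 : 0 ≤ clamp ((2:ℝ)^(n:ℕ)) (-u) :=
      clamp_nonneg (by positivity) (le_trans (by positivity) h1')
    rcases eq_or_lt_of_le hw0 with hzero | hpos
    · -- clamp(-u) = 0, so u = 0, a = 0
      have hu0 : -u = 0 := clamp_eq_zero (by positivity) hzero.symm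
      have ha0 : a = 0 := by
        by_contra hne
        have : (1:ℝ) ≤ (a:ℝ) := by exact_mod_cast Nat.one_le_iff_ne_zero.2 hne
        nlinarith [h1', (by positivity : (0:ℝ) < (2:ℝ)^(1-(m:ℤ)))]
      right; left
      have hcv : clamp ((2:ℝ)^(n:ℕ)) u = 0 := by rw [hv, ← hzero, neg_zero]
      rw [hcv]
      subst ha0
      simp only [Nat.zero_div, Nat.zero_min, Nat.cast_zero, abs_zero, zero_mul,
        Int.floor_zero, Int.toNat_zero, Nat.zero_min]
      have hbs : bsgn (decide ((0:ℝ) ≤ (0:ℝ))) = 1 := by norm_num [bsgn]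
      constructor
      · rw [hbs]
        simp only [bsgn, Bool.false_eq_true, ite_false]
        rw [hdub]; ring
      · simp only [bsgn, Bool.false_eq_true, ite_false]
        rw [hdub]; ring
    · -- clamp(-u) > 0, so clamp(u) < 0
      have hvneg : clamp ((2:ℝ)^(n:ℕ)) u < 0 := by rw [hv]; linarith
      have hd : decide (0 ≤ clamp ((2:ℝ)^(n:ℕ)) u) = false := by
        simp only [decide_eq_false_iff_not, not_le]; exact hvneg
      have habs : |clamp ((2:ℝ)^(n:ℕ)) u| = clamp ((2:ℝ)^(n:ℕ)) (-u) := by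
        rw [abs_of_neg hvneg, hv, neg_neg]
      rcases choice_scalar m n hn hnm a (-u) h1' h2' with hc | ⟨hc, hw⟩
      · left
        rw [hd, habs, hc]
      · right; right
        rw [hd, habs, hc]
        constructor
        · simp only [bsgn, Bool.false_eq_true, ite_false]
          push_cast
          rw [hdub]; ring
        · rw [hv, hw]
          simp only [bsgn, Bool.false_eq_true, ite_false]
          push_cast
          rw [hdub]; ring
  · -- s = true
    have h1' : (2:ℝ)^(1-(m:ℤ)) * a ≤ u := by simpa [bsgn] using h1
    have h2' : u ≤ (2:ℝ)^(1-(m:ℤ)) * ((a:ℝ)+1) := by simpa [bsgn] using h2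
    have hw0 : 0 ≤ clamp ((2:ℝ)^(n:ℕ)) u :=
      clamp_nonneg (by positivity) (le_trans (by positivity) h1')
    have hd : decide (0 ≤ clamp ((2:ℝ)^(n:ℕ)) u) = true := decide_eq_true hw0
    have habs : |clamp ((2:ℝ)^(n:ℕ)) u| = clamp ((2:ℝ)^(n:ℕ)) u := abs_of_nonneg hw0
    rcases choice_scalar m n hn hnm a u h1' h2' with hc | ⟨hc, hw⟩
    · left
      rw [hd, habs, hc]
    · right; left
      rw [hd, habs, hc]
      constructor
      · simp only [bsgn, ite_true]
        push_cast
        ring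
      · rw [hw]
        simp only [bsgn, ite_true]
        push_cast
        rw [hdub]; ring

end MoreClamp
/-- **Statement 13.** For `m > n ≥ 1` and a Lipschitz `f : ℓ₁ → ℝ` with `f(0) = 0`,
the function `Q_n(f) ∘ τ_m : ℓ₁^m → ℝ` has property (AF) on each hypercube
`C(x^{ε,0}_{h,m−1}, 2^{1−m}) ⊆ ℝ^m`, for every `ε ∈ {−1,1}^m` and every
`h ∈ {0,…,2^{2m−2}−1}^m`. -/
theorem Qn_comp_tau_hasAF (m n : ℕ) (hn : 0 < n) (hnm : n < m)
    (f : EllOne → ℝ) (hf : ∃ K : ℝ≥0, LipschitzWith K f) (hf0 : f 0 = 0)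
    (ε : Fin m → Bool) (h : Fin m → ℕ) (hh : ∀ i, h i ≤ 2 ^ (2 * m - 2) - 1) :
    HasAF (cube (gridPt ε 0 h (m - 1)) ((2 : ℝ) ^ (1 - (m : ℤ))))
      (fun u => Qn n f (tau m u)) := by
  intro a b ha hb hseg t ht
  obtain ⟨i, hab⟩ := hseg
  set g : (Fin n → ℝ) → ℝ := fun u => f (tau n u) with hg
  have hcast : ∀ j : Fin n, (j : ℕ) < m := fun j => lt_trans j.2 hnm
  have htr : ∀ u : Fin m → ℝ,
      Qn n f (tau m u) = Pn n g (fun j : Fin n => u ⟨j, hcast j⟩) := by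
    intro u
    unfold Qn
    congr 1
    funext j
    show (tau m u) (j : ℕ) = u ⟨j, hcast j⟩
    exact dif_pos (hcast j)
  simp only [htr]
  by_cases hi : (i : ℕ) < n
  · -- the segment direction is among the first n coordinates
    set i' : Fin n := ⟨i, hi⟩ with hi'
    set pra : Fin n → ℝ := fun j => a ⟨j, hcast j⟩ with hpra
    set prb : Fin n → ℝ := fun j => b ⟨j, hcast j⟩ with hprb
    have prb_eq : ∀ j : Fin n, j ≠ i' → prb j = pra j := by
      intro j hj
      refine (hab ⟨j, hcast j⟩ ?_).symm
      intro he
      have hv : (j : ℕ) = (i : ℕ) := congrArg Fin.val he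
      exact hj (Fin.ext hv)
    -- bounds on the i-th coordinates coming from the cube membership
    have hdubm : (2:ℝ)^(1-(m:ℤ)) = 2 * (2:ℝ)^(-(m:ℤ)) := by
      rw [show (1-(m:ℤ)) = (-(m:ℤ))+1 by ring, two_zpow_dub]
    have hbound : ∀ x : ℝ, |x - gridPt ε 0 h (m-1) i| ≤ (2:ℝ)^(1-(m:ℤ))/2 →
        ((2:ℝ)^(1-(m:ℤ)) * (h i : ℝ) ≤ bsgn (ε i) * x ∧
          bsgn (ε i) * x ≤ (2:ℝ)^(1-(m:ℤ)) * ((h i : ℝ)+1)) := by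
      intro x hx
      rw [gridPt_coord (lt_trans hn hnm) ε h i] at hx
      rw [abs_le] at hx
      obtain ⟨hx1, hx2⟩ := hx
      cases hε : ε i
      · rw [hε] at hx1 hx2
        simp only [bsgn, Bool.false_eq_true, ite_false] at hx1 hx2 ⊢
        constructor <;> nlinarith [hdubm]
      · rw [hε] at hx1 hx2
        simp only [bsgn, ite_true] at hx1 hx2 ⊢
        constructor <;> nlinarith [hdubm]
    have hpa := hbound (a i) (ha i)
    have hpb := hbound (b i) (hb i)
    have hpm := convex_bound hpa.1 hpa.2 hpb.1 hpb.2 ht.1 ht.2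
    rw [← bsgn_convex] at hpm
    -- the reference cube centre
    set w0 : Fin n → ℝ := clampCube ((2:ℝ)^n) pra with hw0
    set w1 : Fin n → ℝ := clampCube ((2:ℝ)^n) prb with hw1
    set cg : ℝ := bsgn (ε i) *
      ((2:ℝ)^(-(n:ℤ)) + (2:ℝ)^(1-(n:ℤ)) * ((min (h i / 2^(m-n)) (2^(2*n-2)-1) : ℕ):ℝ)) with hcg
    set Yref : Fin n → ℝ :=
      Function.update (gridPt (epsChoice w0) 0 (hChoice n w0) (n-1)) i' cg with hYref
    have hRne : ((2:ℝ)^(1-(n:ℤ))) ≠ 0 := by positivity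
    have hhalfn : (2:ℝ)^(1-(n:ℤ))/2 = (2:ℝ)^(-(n:ℤ)) := by
      rw [show (1-(n:ℤ)) = (-(n:ℤ))+1 by ring, two_zpow_dub]
      ring
    have hdubn : (2:ℝ)^(1-(n:ℤ)) = 2 * (2:ℝ)^(-(n:ℤ)) := by
      rw [show (1-(n:ℤ)) = (-(n:ℤ))+1 by ring, two_zpow_dub]
    have main : ∀ u' : Fin n → ℝ, (∀ j, j ≠ i' → u' j = pra j) →
        (2:ℝ)^(1-(m:ℤ)) * (h i : ℝ) ≤ bsgn (ε i) * u' i' →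
        bsgn (ε i) * u' i' ≤ (2:ℝ)^(1-(m:ℤ)) * ((h i : ℝ)+1) →
        Pn n g u' = lam g Yref ((2:ℝ)^(1-(n:ℤ))) (clampCube ((2:ℝ)^n) u') := by
      intro u' hju hb1 hb2
      set wv : Fin n → ℝ := clampCube ((2:ℝ)^n) u' with hwv
      show lam g (gridPt (epsChoice wv) 0 (hChoice n wv) (n-1)) ((2:ℝ)^(1-(n:ℤ))) wv
        = lam g Yref ((2:ℝ)^(1-(n:ℤ))) wv
      have hYj : ∀ j, j ≠ i' → gridPt (epsChoice wv) 0 (hChoice n wv) (n-1) j = Yref j := by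
        intro j hj
        rw [hYref, Function.update_of_ne hj]
        have hwj : wv j = w0 j := by
          rw [hwv, hw0]
          show clamp _ (u' j) = clamp _ (pra j)
          rw [hju j hj]
        simp only [gridPt, epsChoice, hChoice, hwj]
      have hYi : gridPt (epsChoice wv) 0 (hChoice n wv) (n-1) i'
          = bsgn (decide (0 ≤ clamp ((2:ℝ)^(n:ℕ)) (u' i'))) *
            ((2:ℝ)^(-(n:ℤ)) + (2:ℝ)^(1-(n:ℤ)) *
              ((min (Int.toNat ⌊|clamp ((2:ℝ)^(n:ℕ)) (u' i')| * (2:ℝ)^((n:ℤ)-1)⌋)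
                (2^(2*n-2)-1) : ℕ) : ℝ)) := by
        rw [gridPt_coord hn]
        rfl
      have hYrefi : Yref i' = cg := by rw [hYref, Function.update_self]
      rcases choice_scalar_signed m n hn hnm (ε i) (h i) (u' i') hb1 hb2 with
        hcc | ⟨hc1, hc2⟩ | ⟨hc1, hc2⟩
      · have : gridPt (epsChoice wv) 0 (hChoice n wv) (n-1) = Yref := by
          funext j
          by_cases hj : j = i'
          · subst hj
            rw [hYi, hcc, hYrefi, hcg]
          · exact hYj j hj
        rw [this]
      · refine (lam_face g Yref (gridPt (epsChoice wv) 0 (hChoice n wv) (n-1)) hRne i'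
          (fun j hj => (hYj j hj).symm) ?_ wv ?_).symm
        · rw [hYi, hc1, hYrefi, hcg]
        · show clamp ((2:ℝ)^(n:ℕ)) (u' i') = Yref i' + (2:ℝ)^(1-(n:ℤ))/2
          rw [hc2, hYrefi, hcg, hhalfn]
      · refine lam_face g (gridPt (epsChoice wv) 0 (hChoice n wv) (n-1)) Yref hRne i'
          hYj ?_ wv ?_
        · rw [hYi, hc1, hYrefi, hcg]; ring
        · show clamp ((2:ℝ)^(n:ℕ)) (u' i') =
            gridPt (epsChoice wv) 0 (hChoice n wv) (n-1) i' + (2:ℝ)^(1-(n:ℤ))/2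
          rw [hc2, hYi, hc1, hhalfn, hdubn]
          ring
    -- apply the main claim to the three relevant points
    have hia : pra i' = a i := rfl
    have hib : prb i' = b i := rfl
    have hma := main pra (fun _ _ => rfl) (by rw [hia]; exact hpa.1) (by rw [hia]; exact hpa.2)
    have hmb := main prb (fun j hj => prb_eq j hj) (by rw [hib]; exact hpb.1)
      (by rw [hib]; exact hpb.2)
    have hmt := main (fun j => pra j + t * (prb j - pra j))
      (fun j hj => by
        show pra j + t * (prb j - pra j) = pra j
        rw [prb_eq j hj]; ring)
      (by show _ ≤ bsgn (ε i) * (pra i' + t * (prb i' - pra i')); rw [hia, hib]; exact hpm.1)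
      (by show bsgn (ε i) * (pra i' + t * (prb i' - pra i')) ≤ _; rw [hia, hib]; exact hpm.2)
    have hwt : clampCube ((2:ℝ)^n) (fun j => pra j + t * (prb j - pra j))
        = fun j => w0 j + t * (w1 j - w0 j) := by
      funext j
      show clamp _ (pra j + t * (prb j - pra j)) = w0 j + t * (w1 j - w0 j)
      by_cases hj : j = i'
      · subst hj
        have := clamp_affine m n hn hnm (ε i) (h i) (pra i') (prb i') t ht.1 ht.2
          (by rw [hia]; exact hpa.1) (by rw [hia]; exact hpa.2)
          (by rw [hib]; exact hpb.1) (by rw [hib]; exact hpb.2)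
        exact this
      · have e1 : prb j = pra j := prb_eq j hj
        have e2 : w1 j = w0 j := by
          rw [hw1, hw0]
          show clamp _ (prb j) = clamp _ (pra j)
          rw [e1]
        rw [e1, e2]
        show clamp _ (pra j + t * (pra j - pra j)) = w0 j + t * (w0 j - w0 j)
        rw [show pra j + t * (pra j - pra j) = pra j by ring]
        rw [show w0 j + t * (w0 j - w0 j) = w0 j by ring]
        rfl
    have hfinal : Pn n g (fun j => pra j + t * (prb j - pra j))
        = (1 - t) * Pn n g pra + t * Pn n g prb := by
      rw [hmt, hma, hmb, hwt]
      exact lam_affine g Yref ((2:ℝ)^(1-(n:ℤ))) i' w0 w1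
        (fun j hj => by
          rw [hw0, hw1]
          show clamp _ (pra j) = clamp _ (prb j)
          rw [prb_eq j hj]) t
    exact hfinal
  · -- the segment direction is beyond the first n coordinates: everything is constant
    have hba : ∀ j : Fin n, b ⟨j, hcast j⟩ = a ⟨j, hcast j⟩ := by
      intro j
      refine (hab ⟨j, hcast j⟩ ?_).symm
      intro he
      have : (j : ℕ) = (i : ℕ) := congrArg Fin.val he
      omega
    have h1 : Pn n g (fun j : Fin n =>
        a ⟨j, hcast j⟩ + t * (b ⟨j, hcast j⟩ - a ⟨j, hcast j⟩))
        = Pn n g (fun j : Fin n => a ⟨j, hcast j⟩) := by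
      congr 1
      funext j
      rw [hba j]
      ring
    have h2 : Pn n g (fun j : Fin n => b ⟨j, hcast j⟩)
        = Pn n g (fun j : Fin n => a ⟨j, hcast j⟩) := by
      congr 1
      funext j
      rw [hba j]
    rw [h1, h2]
    ring
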